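/- Let T : Fin n → Fin m → Σ be a table with 1 ≤ k ≤ n, let B = {i ∈ Fin n : |class(i)| < k}, and let s = ∑_{C} (|C| − k), the sum ranging over the duplicate classes C of size at least k. Then: (i) if |B| ≥ k, there exists a k-anonymous partition of the rows of T with cost at most m·|B|; (ii) if 0 < |B| < k and |B| + s ≥ k, there exists a k-anonymous partition with cost at most m·k; (iii) if 0 < |B| and |B| + s < k, there exists a k-anonymous partition with cost at most m·(|B| + c_min), where c_min is the minimum size of a duplicate class of size at least k (such a class exists in this case). -/
import Mathlib


open Finset

attribute [local instance] Classical.propDecidable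

/-- The suppression cost of a set `B` of rows of table `T`. -/
noncomputable def suppCost {n : ℕ} {ι α : Type*} [Fintype ι]
    (T : Fin n → ι → α) (B : Finset (Fin n)) : ℕ :=
  B.card *
    (Finset.univ.filter (fun j : ι => ¬ ∀ i ∈ B, ∀ i' ∈ B, T i j = T i' j)).card

/-- `P` is a partition of the rows `Fin n`. -/
def IsRowPartition {n : ℕ} (P : Finset (Finset (Fin n))) : Prop :=
  (∀ B ∈ P, B.Nonempty) ∧
  (∀ B ∈ P, ∀ B' ∈ P, B ≠ B' → Disjoint B B') ∧
  (∀ i : Fin n, ∃ B ∈ P, i ∈ B)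

/-- The cost of a partition: the sum of the suppression costs of its blocks. -/
noncomputable def partCost {n : ℕ} {ι α : Type*} [Fintype ι]
    (T : Fin n → ι → α) (P : Finset (Finset (Fin n))) : ℕ :=
  ∑ B ∈ P, suppCost T B

/-- The duplicate class of row `i`: all rows identical to row `i`. -/
noncomputable def cls {n m : ℕ} {σ : Type*} (T : Fin n → Fin m → σ) (i : Fin n) :
    Finset (Fin n) :=
  Finset.univ.filter (fun i' => ∀ j, T i' j = T i j)

section helpers
variable {σ : Type*} {n m : ℕ} (T : Fin n → Fin m → σ)

lemma mem_cls_self (i : Fin n) : i ∈ cls T i := by simp [cls]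

lemma cls_eq_of_mem {i i' : Fin n} (h : i' ∈ cls T i) : cls T i' = cls T i := by
  simp only [cls, Finset.mem_filter, Finset.mem_univ, true_and] at h ⊢
  ext x
  simp only [Finset.mem_filter, Finset.mem_univ, true_and]
  exact ⟨fun hx j => (hx j).trans (h j), fun hx j => (hx j).trans (h j).symm⟩

lemma cls_eq_of_mem_both {i a b : Fin n} (ha : i ∈ cls T a) (hb : i ∈ cls T b) :
    cls T a = cls T b := (cls_eq_of_mem T ha).symm.trans (cls_eq_of_mem T hb)

lemma suppCost_le (A : Finset (Fin n)) : suppCost T A ≤ m * A.card := by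
  have hf : (Finset.univ.filter (fun j : Fin m => ¬ ∀ i ∈ A, ∀ i' ∈ A, T i j = T i' j)).card ≤ m :=
    (Finset.card_filter_le _ _).trans (le_of_eq (by rw [Finset.card_univ, Fintype.card_fin]))
  calc suppCost T A ≤ A.card * m := Nat.mul_le_mul_left _ hf
    _ = m * A.card := mul_comm _ _

lemma suppCost_class_zero {A : Finset (Fin n)} {i : Fin n} (h : A ⊆ cls T i) :
    suppCost T A = 0 := by
  rw [suppCost]
  apply Nat.mul_eq_zero.2
  right
  rw [Finset.card_eq_zero, Finset.filter_eq_empty_iff]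
  intro j _
  push_neg
  intro a ha b hb
  have ha' := h ha; have hb' := h hb
  simp only [cls, Finset.mem_filter] at ha' hb'
  rw [ha'.2 j, hb'.2 j]

end helpers

lemma main_construct {σ : Type*} (n m k : ℕ) (hk : 1 ≤ k) (T : Fin n → Fin m → σ)
    (E : Finset (Fin n))
    (hcls : ∀ i : Fin n, k ≤ (cls T i).card → cls T i ⊆ E ∨ k ≤ (cls T i \ E).card)
    (hcard : k ≤ ((Finset.univ.filter (fun i : Fin n => (cls T i).card < k)) ∪ E).card) :
    ∃ P : Finset (Finset (Fin n)), IsRowPartition P ∧ (∀ B ∈ P, k ≤ B.card) ∧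
      partCost T P ≤ m * ((Finset.univ.filter (fun i : Fin n => (cls T i).card < k)).card + E.card) := by
  classical
  set Bset := Finset.univ.filter (fun i : Fin n => (cls T i).card < k) with hBdef
  set A := Bset ∪ E with hAdef
  set P₀ := (((Finset.univ.image (cls T)).filter (fun C => k ≤ C.card)).image (fun C => C \ E)).erase ∅ with hP0
  have hmemP₀ : ∀ X ∈ P₀, ∃ i : Fin n, k ≤ (cls T i).card ∧ X = cls T i \ E ∧ X.Nonempty := by
    intro X hX
    rw [hP0, Finset.mem_erase] at hX
    obtain ⟨hne, hX⟩ := hX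
    obtain ⟨C, hC, rfl⟩ := Finset.mem_image.1 hX
    obtain ⟨hC1, hC2⟩ := Finset.mem_filter.1 hC
    obtain ⟨i, _, rfl⟩ := Finset.mem_image.1 hC1
    exact ⟨i, hC2, rfl, Finset.nonempty_iff_ne_empty.2 hne⟩
  have hAdisj : ∀ X ∈ P₀, Disjoint A X := by
    intro X hX
    obtain ⟨i, hbig, rfl, _⟩ := hmemP₀ X hX
    rw [Finset.disjoint_right]
    intro x hx
    rw [Finset.mem_sdiff] at hx
    have hxE : x ∉ E := hx.2
    have hxB : x ∉ Bset := by
      rw [hBdef]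
      simp only [Finset.mem_filter, Finset.mem_univ, true_and, not_lt]
      rw [cls_eq_of_mem T hx.1]; exact hbig
    simp [hAdef, hxE, hxB]
  have hAne : A.Nonempty := Finset.card_pos.1 (lt_of_lt_of_le hk hcard)
  have hAnot : A ∉ P₀ := by
    intro h
    have := hAdisj A h
    rw [disjoint_self] at this
    exact hAne.ne_empty (by simpa using this)
  refine ⟨insert A P₀, ⟨?_, ?_, ?_⟩, ?_, ?_⟩
  · intro X hX
    rcases Finset.mem_insert.1 hX with rfl | hX
    · exact hAne
    · exact (hmemP₀ X hX).choose_spec.2.2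
  · intro X hX Y hY hne
    rcases Finset.mem_insert.1 hX with rfl | hX <;> rcases Finset.mem_insert.1 hY with rfl | hY
    · exact absurd rfl hne
    · exact hAdisj Y hY
    · exact (hAdisj X hX).symm
    · obtain ⟨i, _, rfl, _⟩ := hmemP₀ X hX
      obtain ⟨i', _, rfl, _⟩ := hmemP₀ Y hY
      rw [Finset.disjoint_left]
      intro x hx hx'
      apply hne
      rw [Finset.mem_sdiff] at hx hx'
      rw [cls_eq_of_mem_both T hx.1 hx'.1]
  · intro i
    by_cases hi : i ∈ A
    · exact ⟨A, Finset.mem_insert_self _ _, hi⟩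
    · have hiB : i ∉ Bset := fun h => hi (Finset.mem_union_left _ h)
      have hiE : i ∉ E := fun h => hi (Finset.mem_union_right _ h)
      have hbig : k ≤ (cls T i).card := by
        by_contra h
        exact hiB (by simp [hBdef, lt_of_not_ge h])
      have hiX : i ∈ cls T i \ E := Finset.mem_sdiff.2 ⟨mem_cls_self T i, hiE⟩
      refine ⟨cls T i \ E, Finset.mem_insert_of_mem ?_, hiX⟩
      rw [hP0, Finset.mem_erase]
      refine ⟨Finset.nonempty_iff_ne_empty.1 ⟨i, hiX⟩, ?_⟩
      exact Finset.mem_image.2 ⟨cls T i, Finset.mem_filter.2 ⟨Finset.mem_image.2 ⟨i, Finset.mem_univ i, rfl⟩, hbig⟩, rfl⟩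
  · intro X hX
    rcases Finset.mem_insert.1 hX with rfl | hX
    · exact hcard
    · obtain ⟨i, hbig, rfl, hne⟩ := hmemP₀ X hX
      rcases hcls i hbig with hsub | h
      · exact absurd (Finset.sdiff_eq_empty_iff_subset.2 hsub) hne.ne_empty
      · exact h
  · rw [partCost, Finset.sum_insert hAnot]
    have h0 : ∑ X ∈ P₀, suppCost T X = 0 := by
      apply Finset.sum_eq_zero
      intro X hX
      obtain ⟨i, _, rfl, _⟩ := hmemP₀ X hX
      exact suppCost_class_zero T (Finset.sdiff_subset)
    rw [h0, add_zero]
    calc suppCost T A ≤ m * A.card := suppCost_le T A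
      _ ≤ m * (Bset.card + E.card) := Nat.mul_le_mul_left _ (Finset.card_union_le _ _)


theorem stmt17 {σ : Type*} (n m k : ℕ) (hk : 1 ≤ k) (hkn : k ≤ n)
    (T : Fin n → Fin m → σ) :
    ((k ≤ (Finset.univ.filter (fun i : Fin n => (cls T i).card < k)).card →
      ∃ P : Finset (Finset (Fin n)), IsRowPartition P ∧ (∀ B ∈ P, k ≤ B.card) ∧
        partCost T P ≤
          m * (Finset.univ.filter (fun i : Fin n => (cls T i).card < k)).card) ∧
    ((0 < (Finset.univ.filter (fun i : Fin n => (cls T i).card < k)).card ∧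
      (Finset.univ.filter (fun i : Fin n => (cls T i).card < k)).card < k ∧
      k ≤ (Finset.univ.filter (fun i : Fin n => (cls T i).card < k)).card +
        ∑ C ∈ (Finset.univ.image (cls T)).filter (fun C => k ≤ C.card), (C.card - k)) →
      ∃ P : Finset (Finset (Fin n)), IsRowPartition P ∧ (∀ B ∈ P, k ≤ B.card) ∧
        partCost T P ≤ m * k) ∧
    ((0 < (Finset.univ.filter (fun i : Fin n => (cls T i).card < k)).card ∧
      (Finset.univ.filter (fun i : Fin n => (cls T i).card < k)).card +
        ∑ C ∈ (Finset.univ.image (cls T)).filter (fun C => k ≤ C.card), (C.card - k)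
        < k) →
      (∃ i : Fin n, k ≤ (cls T i).card) ∧
      ∃ P : Finset (Finset (Fin n)), IsRowPartition P ∧ (∀ B ∈ P, k ≤ B.card) ∧
        partCost T P ≤
          m * ((Finset.univ.filter (fun i : Fin n => (cls T i).card < k)).card +
            sInf {c : ℕ | ∃ i : Fin n, k ≤ (cls T i).card ∧ (cls T i).card = c}))) := by
  classical
  set Bset := Finset.univ.filter (fun i : Fin n => (cls T i).card < k) with hBdef
  set bigs := (Finset.univ.image (cls T)).filter (fun C => k ≤ C.card) with hbigsdef
  refine ⟨?_, ?_, ?_⟩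
  -- Case (i)
  · intro hB
    obtain ⟨P, h1, h2, h3⟩ := main_construct n m k hk T ∅
      (fun i hi => Or.inr (by simpa using hi))
      (by simpa using hB)
    exact ⟨P, h1, h2, by simpa using h3⟩
  -- Case (ii)
  · rintro ⟨hpos, hBk, hs⟩
    have hbigsmem : ∀ C ∈ bigs, ∀ x ∈ C, cls T x = C ∧ k ≤ C.card := by
      intro C hC x hx
      rw [hbigsdef, Finset.mem_filter] at hC
      obtain ⟨i, _, rfl⟩ := Finset.mem_image.1 hC.1
      exact ⟨cls_eq_of_mem T hx, hC.2⟩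
    have hD : ∀ C : Finset (Fin n), ∃ D ⊆ C, D.card = C.card - k :=
      fun C => Finset.exists_subset_card_eq (Nat.sub_le _ _)
    choose D hDsub hDcard using hD
    set U := bigs.biUnion D with hU
    have hUcard : U.card = ∑ C ∈ bigs, (C.card - k) := by
      rw [hU, Finset.card_biUnion]
      · exact Finset.sum_congr rfl (fun C _ => hDcard C)
      · intro C hC C' hC' hne
        refine Finset.disjoint_left.2 (fun {x} hx hx' => hne ?_)
        rw [← (hbigsmem C hC x (hDsub C hx)).1, ← (hbigsmem C' hC' x (hDsub C' hx')).1]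
    have hle : k - Bset.card ≤ U.card := by rw [hUcard]; omega
    obtain ⟨E, hEU, hEcard⟩ := Finset.exists_subset_card_eq hle
    have hEbig : ∀ x ∈ E, ∃ C ∈ bigs, x ∈ D C := fun x hx => Finset.mem_biUnion.1 (hEU hx)
    have hclsE : ∀ i : Fin n, k ≤ (cls T i).card → cls T i ⊆ E ∨ k ≤ (cls T i \ E).card := by
      intro i hbig
      right
      have hCbigs : cls T i ∈ bigs := by
        rw [hbigsdef, Finset.mem_filter]
        exact ⟨Finset.mem_image.2 ⟨i, Finset.mem_univ i, rfl⟩, hbig⟩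
      have hsub : cls T i ∩ E ⊆ D (cls T i) := by
        intro x hx
        rw [Finset.mem_inter] at hx
        obtain ⟨C', hC', hxD⟩ := hEbig x hx.2
        have h1 := (hbigsmem C' hC' x (hDsub C' hxD)).1
        have h2 := cls_eq_of_mem T hx.1
        rw [← h2, h1]
        exact hxD
      have hintercard : (cls T i ∩ E).card ≤ (cls T i).card - k :=
        (Finset.card_le_card hsub).trans (le_of_eq (hDcard _))
      have hsdiff : (cls T i \ E).card = (cls T i).card - (cls T i ∩ E).card := by
        rw [← Finset.sdiff_inter_self_left, Finset.card_sdiff_of_subset Finset.inter_subset_left]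
      omega
    have hcardE : k ≤ (Bset ∪ E).card := by
      have hdisj : Disjoint Bset E := by
        refine Finset.disjoint_right.2 (fun {x} hx => ?_)
        obtain ⟨C, hC, hxD⟩ := hEbig x hx
        obtain ⟨hclsx, hCk⟩ := hbigsmem C hC x (hDsub C hxD)
        rw [hBdef]
        simp only [Finset.mem_filter, Finset.mem_univ, true_and, not_lt]
        rw [hclsx]; exact hCk
      rw [Finset.card_union_of_disjoint hdisj, hEcard]
      omega
    obtain ⟨P, h1, h2, h3⟩ := main_construct n m k hk T E hclsE hcardE
    refine ⟨P, h1, h2, le_trans h3 ?_⟩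
    rw [← hBdef, hEcard]
    exact Nat.mul_le_mul_left _ (by omega)
  -- Case (iii)
  · rintro ⟨hpos, hlt⟩
    have hBlt : Bset.card < k := lt_of_le_of_lt (Nat.le_add_right _ _) hlt
    have hex : ∃ i : Fin n, k ≤ (cls T i).card := by
      by_contra h
      push_neg at h
      have huniv : Bset = Finset.univ :=
        Finset.eq_univ_iff_forall.2 (fun i => by
          rw [hBdef]; simp only [Finset.mem_filter, Finset.mem_univ, true_and]; exact h i)
      rw [huniv, Finset.card_univ, Fintype.card_fin] at hBlt
      omega
    refine ⟨hex, ?_⟩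
    have hSne : {c : ℕ | ∃ i : Fin n, k ≤ (cls T i).card ∧ (cls T i).card = c}.Nonempty := by
      obtain ⟨i, hi⟩ := hex
      exact ⟨(cls T i).card, i, hi, rfl⟩
    obtain ⟨i₀, hi₀, hc⟩ := Nat.sInf_mem hSne
    have hclsE : ∀ i : Fin n, k ≤ (cls T i).card → cls T i ⊆ cls T i₀ ∨ k ≤ (cls T i \ cls T i₀).card := by
      intro i hbig
      by_cases hd : Disjoint (cls T i) (cls T i₀)
      · right
        rwa [Finset.sdiff_eq_self_of_disjoint hd]
      · left
        obtain ⟨x, hx1, hx2⟩ := Finset.not_disjoint_iff.1 hd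
        exact le_of_eq (cls_eq_of_mem_both T hx1 hx2)
    have hcardE : k ≤ (Bset ∪ cls T i₀).card :=
      hi₀.trans (Finset.card_le_card Finset.subset_union_right)
    obtain ⟨P, h1, h2, h3⟩ := main_construct n m k hk T (cls T i₀) hclsE hcardE
    exact ⟨P, h1, h2, by rwa [hc] at h3⟩
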